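/- Let D be the diagonal complex 2×2 matrix diag(exp(-πi/10), exp(-9πi/10)) and M the matrix from the mf₅ mixing. Then the matrices D and -M satisfy the relations D²⁰ = I, (-M)² = I, and ((-M)·D)³ = I. -/

import Mathlib

open Real Matrix Complex

lemma cos2pi5 : Real.cos (2 * π / 5) = (Real.sqrt 5 - 1) / 4 := by
  have h : (2 : ℝ) * π / 5 = 2 * (π / 5) := by ring
  have h5 : Real.sqrt 5 ^ 2 = 5 := Real.sq_sqrt (by norm_num)
  rw [h, Real.cos_two_mul, Real.cos_pi_div_five]
  nlinarith [h5]

lemma R1 : Real.sin (π / 5) ^ 2 + Real.sin (2 * π / 5) ^ 2 = 5 / 4 := by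
  have h1 := Real.sin_sq_add_cos_sq (π / 5)
  have h2 := Real.sin_sq_add_cos_sq (2 * π / 5)
  have h5 : Real.sqrt 5 ^ 2 = 5 := Real.sq_sqrt (by norm_num)
  rw [Real.cos_pi_div_five] at h1
  rw [cos2pi5] at h2
  nlinarith [h5]

lemma R2 : Real.sin (π / 5) * Real.cos (π / 10) = Real.sqrt 5 / 4 := by
  have hc : Real.cos (π / 10) = Real.sin (2 * π / 5) := by
    rw [← Real.cos_pi_div_two_sub]; ring_nf
  rw [hc]
  have h5 : Real.sqrt 5 ^ 2 = 5 := Real.sq_sqrt (by norm_num)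
  have h5p : (0:ℝ) < Real.sqrt 5 := Real.sqrt_pos.mpr (by norm_num)
  have hpi := Real.pi_pos
  have s1 : (0:ℝ) < Real.sin (π / 5) := Real.sin_pos_of_pos_of_lt_pi (by linarith) (by linarith)
  have s2 : (0:ℝ) < Real.sin (2 * π / 5) := Real.sin_pos_of_pos_of_lt_pi (by linarith) (by linarith)
  have h1 := Real.sin_sq_add_cos_sq (π / 5)
  have h2 := Real.sin_sq_add_cos_sq (2 * π / 5)
  rw [Real.cos_pi_div_five] at h1
  rw [cos2pi5] at h2
  have hp : Real.sin (π / 5) ^ 2 * Real.sin (2 * π / 5) ^ 2 = 5 / 16 := by nlinarith [h5]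
  have hx : (Real.sin (π / 5) * Real.sin (2 * π / 5) - Real.sqrt 5 / 4) *
      (Real.sin (π / 5) * Real.sin (2 * π / 5) + Real.sqrt 5 / 4) = 0 := by nlinarith [hp]
  rcases mul_eq_zero.mp hx with h | h
  · linarith
  · nlinarith [mul_pos s1 s2]

lemma rkey : 2 / Real.sqrt 5 * Real.sin (π / 5) * (2 * Real.cos (π / 10)) = 1 := by
  have h5 : Real.sqrt 5 ^ 2 = 5 := Real.sq_sqrt (by norm_num)
  have h5p : (0:ℝ) < Real.sqrt 5 := Real.sqrt_pos.mpr (by norm_num)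
  field_simp
  nlinarith [R2, h5]

lemma key1 : (((2 / Real.sqrt 5 : ℝ) : ℂ) * ((Real.sin (π / 5) : ℝ) : ℂ)) *
    (Complex.exp (-(π:ℂ) * Complex.I / 10) ^ 2 + 1) = Complex.exp (-(π:ℂ) * Complex.I / 10) := by
  have h1 : Complex.exp (-(π:ℂ) * Complex.I / 10) * Complex.exp (((π/10 : ℝ) : ℂ) * Complex.I)
      = 1 := by
    rw [← Complex.exp_add, show -(π:ℂ) * Complex.I / 10 + ((π/10 : ℝ) : ℂ) * Complex.I = 0 by
      push_cast; ring, Complex.exp_zero]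
  have h2 : Complex.exp (-(π:ℂ) * Complex.I / 10) * Complex.exp (-((π/10 : ℝ) : ℂ) * Complex.I)
      = Complex.exp (-(π:ℂ) * Complex.I / 10) ^ 2 := by
    rw [sq, ← Complex.exp_add, ← Complex.exp_add]
    congr 1
    push_cast; ring
  have hE : Complex.exp (-(π:ℂ) * Complex.I / 10) ^ 2 + 1
      = Complex.exp (-(π:ℂ) * Complex.I / 10) * (2 * Complex.cos ((π/10 : ℝ) : ℂ)) := by
    rw [Complex.two_cos, mul_add, h1, h2]
    ring
  rw [hE, ← Complex.ofReal_cos]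
  have h : (((2 / Real.sqrt 5 : ℝ) : ℂ) * ((Real.sin (π / 5) : ℝ) : ℂ)) *
      (Complex.exp (-(π:ℂ) * Complex.I / 10) * (2 * ((Real.cos (π/10) : ℝ) : ℂ)))
      = ((2 / Real.sqrt 5 * Real.sin (π / 5) * (2 * Real.cos (π / 10)) : ℝ) : ℂ) *
        Complex.exp (-(π:ℂ) * Complex.I / 10) := by push_cast; ring
  rw [h, rkey]
  simp

theorem mf5_group_relations :
    let M : Matrix (Fin 2) (Fin 2) ℂ :=
      ((2 / Real.sqrt 5 : ℝ) : ℂ) •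
        !![((Real.sin (π / 5) : ℝ) : ℂ), ((Real.sin (2 * π / 5) : ℝ) : ℂ);
           ((Real.sin (2 * π / 5) : ℝ) : ℂ), -((Real.sin (π / 5) : ℝ) : ℂ)]
    let D : Matrix (Fin 2) (Fin 2) ℂ :=
      !![Complex.exp (-π * Complex.I / 10), 0;
         0, Complex.exp (-9 * π * Complex.I / 10)]
    D ^ 20 = 1 ∧ (-M) ^ 2 = 1 ∧ ((-M) * D) ^ 3 = 1 := by
  intro M D
  set a : ℂ := ((2 / Real.sqrt 5 : ℝ) : ℂ) * ((Real.sin (π / 5) : ℝ) : ℂ) with ha_def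
  set b : ℂ := ((2 / Real.sqrt 5 : ℝ) : ℂ) * ((Real.sin (2 * π / 5) : ℝ) : ℂ) with hb_def
  set e₁ : ℂ := Complex.exp (-(π:ℂ) * Complex.I / 10) with he1_def
  set e₂ : ℂ := Complex.exp (-9 * (π:ℂ) * Complex.I / 10) with he2_def
  have h0 : e₁ ≠ 0 := Complex.exp_ne_zero _
  have he12 : e₁ * e₂ = -1 := by
    rw [he1_def, he2_def, ← Complex.exp_add]
    rw [show -(π:ℂ) * Complex.I / 10 + -9 * (π:ℂ) * Complex.I / 10 = -((π:ℂ) * Complex.I) by ring]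
    rw [Complex.exp_neg, Complex.exp_pi_mul_I]
    norm_num
  have ha2b2 : a ^ 2 + b ^ 2 = 1 := by
    rw [ha_def, hb_def]
    have h5 : Real.sqrt 5 ^ 2 = 5 := Real.sq_sqrt (by norm_num)
    have h5p : (0:ℝ) < Real.sqrt 5 := Real.sqrt_pos.mpr (by norm_num)
    have hr : (2 / Real.sqrt 5 * Real.sin (π / 5)) ^ 2
        + (2 / Real.sqrt 5 * Real.sin (2 * π / 5)) ^ 2 = 1 := by
      field_simp
      nlinarith [R1, h5]
    calc (((2 / Real.sqrt 5 : ℝ) : ℂ) * ((Real.sin (π / 5) : ℝ) : ℂ)) ^ 2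
          + (((2 / Real.sqrt 5 : ℝ) : ℂ) * ((Real.sin (2 * π / 5) : ℝ) : ℂ)) ^ 2
        = (((2 / Real.sqrt 5 * Real.sin (π / 5)) ^ 2
            + (2 / Real.sqrt 5 * Real.sin (2 * π / 5)) ^ 2 : ℝ) : ℂ) := by push_cast; ring
      _ = 1 := by rw [hr]; norm_num
  have key1' : a * (e₁ ^ 2 + 1) = e₁ := key1
  have key2' : a * (e₂ ^ 2 + 1) = -e₂ := by
    have he2 : e₂ = -e₁⁻¹ := by
      field_simp
      linear_combination he12
    rw [he2]
    field_simp
    linear_combination key1'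
  have hM : M = !![a, b; b, -a] := by
    ext i j
    fin_cases i <;> fin_cases j <;>
      simp [M, ha_def, hb_def]
  -- D = diagonal
  have hD : D = Matrix.diagonal ![e₁, e₂] := by
    ext i j
    fin_cases i <;> fin_cases j <;> simp [D, Matrix.diagonal, he1_def, he2_def, neg_mul]
  refine ⟨?_, ?_, ?_⟩
  · rw [hD, Matrix.diagonal_pow]
    have h1 : e₁ ^ 20 = 1 := by
      rw [he1_def, ← Complex.exp_nat_mul,
        show (20:ℕ) * (-(π:ℂ) * Complex.I / 10) = (-1 : ℤ) * (2 * (π:ℂ) * Complex.I) by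
          push_cast; ring]
      exact Complex.exp_int_mul_two_pi_mul_I (-1)
    have h2 : e₂ ^ 20 = 1 := by
      rw [he2_def, ← Complex.exp_nat_mul,
        show (20:ℕ) * (-9 * (π:ℂ) * Complex.I / 10) = (-9 : ℤ) * (2 * (π:ℂ) * Complex.I) by
          push_cast; ring]
      exact Complex.exp_int_mul_two_pi_mul_I (-9)
    have hv : (![e₁, e₂] ^ 20) = 1 := by
      funext i
      fin_cases i <;> simp [h1, h2]
    rw [hv]
    exact Matrix.diagonal_one
  · rw [neg_sq, hM]
    ext i j
    fin_cases i <;> fin_cases j <;>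
      simp only [pow_two, Matrix.mul_apply, Fin.sum_univ_two, Matrix.cons_val',
        Matrix.cons_val_zero, Matrix.cons_val_one, Matrix.head_cons,
        Matrix.head_fin_const, Matrix.empty_val', Matrix.cons_val_fin_one,
        Matrix.one_apply, Fin.zero_eq_one_iff, Fin.one_eq_zero_iff] <;>
      norm_num
    · linear_combination ha2b2
    · ring
    · ring
    · linear_combination ha2b2
  · set A : Matrix (Fin 2) (Fin 2) ℂ := (-M) * D with hA_def
    have hA : A = !![-(a*e₁), -(b*e₂); -(b*e₁), a*e₂] := by
      rw [hA_def, hM, hD]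
      ext i j
      fin_cases i <;> fin_cases j <;>
        simp [Matrix.mul_apply, Fin.sum_univ_two, Matrix.diagonal] <;> ring
    have hA2 : A ^ 2 = -A - 1 := by
      rw [pow_two, hA]
      ext i j
      fin_cases i <;> fin_cases j <;>
        simp only [Matrix.mul_apply, Fin.sum_univ_two, Matrix.cons_val', Matrix.cons_val_zero,
          Matrix.cons_val_one, Matrix.head_cons, Matrix.head_fin_const, Matrix.empty_val',
          Matrix.cons_val_fin_one, Matrix.sub_apply, Matrix.neg_apply, Matrix.one_apply,
          Fin.zero_eq_one_iff, Fin.one_eq_zero_iff] <;> norm_num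
      · linear_combination a * key1' + b^2 * he12 - ha2b2
      · linear_combination a*b*he12 - b * key2'
      · linear_combination b * key1' - a*b*he12
      · linear_combination a * key2' + b^2 * he12 - ha2b2
    calc A ^ 3 = A ^ 2 * A := by rw [pow_succ]
      _ = (-A - 1) * A := by rw [hA2]
      _ = -(A ^ 2) - A := by rw [sub_mul, neg_mul, one_mul, ← pow_two]
      _ = -(-A - 1) - A := by rw [hA2]
      _ = 1 := by abel
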